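/- Let G = (V, E) be a finite hypergraph with Laplacian eigenvalues λ₁ = 0, λ₂, …, λ_{|V|} (with multiplicity), and let G₁ be obtained from G by adding a k-dominating set. Then the multiset of eigenvalues of L_{G₁} is exactly {0} ∪ {λ_i + 1 : i = 2, …, |V|} ∪ {(|V| + k)/k} ∪ {(k+1)|V|/k with multiplicity k − 1}. -/

import Mathlib

open Finset

/-- The hypergraph Laplacian as an operator on real-valued vertex functions:
`(L_G f)(v) = ∑_{e ∋ v} (1/(|e|-1)) ∑_{u ∈ e} (f v - f u)`. -/
noncomputable def lapOp {V : Type} [Fintype V] [DecidableEq V] (E : Finset (Finset V)) (f : V → ℝ) : V → ℝ :=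
  fun v => ∑ e ∈ E.filter (fun e => v ∈ e), (1 / ((e.card : ℝ) - 1)) * ∑ u ∈ e, (f v - f u)

/-- The matrix of the hypergraph Laplacian. -/
noncomputable def lapMatrix {V : Type} [Fintype V] [DecidableEq V] (E : Finset (Finset V)) : Matrix V V ℝ :=
  Matrix.of fun v w => ∑ e ∈ E.filter (fun e => v ∈ e),
    (1 / ((e.card : ℝ) - 1)) * ((if w = v then (e.card : ℝ) else 0) - (if w ∈ e then 1 else 0))

/-- Edge set obtained from `E` by adding a `k`-dominating set `S = Fin k` of fresh vertices:
the new edges are `S ∪ {u}` for every old vertex `u`. -/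
def domEdges {V : Type} [Fintype V] [DecidableEq V] (E : Finset (Finset V)) (k : ℕ) :
    Finset (Finset (V ⊕ Fin k)) :=
  E.image (Finset.image Sum.inl) ∪
    (Finset.univ : Finset V).image
      (fun u => insert (Sum.inl u) ((Finset.univ : Finset (Fin k)).image Sum.inr))

noncomputable def Jmat (m l : Type*) [Fintype m] [Fintype l] : Matrix m l ℝ :=
  Matrix.of fun _ _ => 1


open Finset Polynomial Matrix

section Gen
variable {n : Type*} [Fintype n] [DecidableEq n]

lemma my_eval_charpoly (M : Matrix n n ℝ) (x : ℝ) :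
    M.charpoly.eval x = (x • (1 : Matrix n n ℝ) - M).det := by
  rw [Matrix.charpoly, ← Polynomial.coe_evalRingHom, RingHom.map_det]
  congr 1
  ext i j
  by_cases hij : i = j
  · subst hij
    simp [Matrix.charmatrix_apply_eq, Matrix.one_apply]
  · simp [Matrix.charmatrix_apply_ne _ _ _ hij, Matrix.one_apply, hij]

lemma my_charmatrix_eq (M : Matrix n n ℝ) :
    charmatrix M = (X : ℝ[X]) • (1 : Matrix n n ℝ[X]) - M.map C := by
  unfold Matrix.charmatrix
  rw [Matrix.smul_one_eq_diagonal]
  rfl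

lemma my_charpoly_conj (P Q M : Matrix n n ℝ) (h1 : P * Q = 1) (h2 : Q * P = 1) :
    (P * M * Q).charpoly = M.charpoly := by
  have hmapPQ : (P.map C) * (Q.map C) = 1 := by
    rw [← Matrix.map_mul, h1, Matrix.map_one _ (map_zero C) (map_one C)]
  have hcm : charmatrix (P * M * Q) = P.map C * charmatrix M * Q.map C := by
    rw [my_charmatrix_eq, my_charmatrix_eq, Matrix.mul_sub, Matrix.sub_mul]
    congr 1
    · rw [Matrix.mul_smul, Matrix.mul_one, Matrix.smul_mul, hmapPQ]
    · rw [Matrix.map_mul, Matrix.map_mul]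
  have hdet : (P.map C).det * (Q.map C).det = 1 := by
    rw [← Matrix.det_mul, hmapPQ, Matrix.det_one]
  rw [Matrix.charpoly, Matrix.charpoly, hcm, Matrix.det_mul, Matrix.det_mul]
  linear_combination (charmatrix M).det * hdet

lemma my_charpoly_diagonal (d : n → ℝ) :
    (Matrix.diagonal d).charpoly = ∏ i, (X - C (d i)) := by
  rw [Matrix.charpoly]
  have hd : charmatrix (Matrix.diagonal d) = Matrix.diagonal (fun i => X - C (d i)) := by
    ext i j
    by_cases hij : i = j
    · subst hij; simp
    · simp [Matrix.charmatrix_apply_ne _ _ _ hij, Matrix.diagonal_apply_ne _ hij,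
        Matrix.diagonal_apply_ne d hij]
  rw [hd, Matrix.det_diagonal]

lemma my_card_roots {M : Matrix n n ℝ} (hM : M.IsHermitian) :
    M.charpoly.roots.card = M.charpoly.natDegree := by
  rw [← Polynomial.splits_iff_card_roots]
  have hU1 : (hM.eigenvectorUnitary : Matrix n n ℝ) * star (hM.eigenvectorUnitary : Matrix n n ℝ) = 1 :=
    (Matrix.mem_unitaryGroup_iff).mp (hM.eigenvectorUnitary).2
  have hU2 : star (hM.eigenvectorUnitary : Matrix n n ℝ) * (hM.eigenvectorUnitary : Matrix n n ℝ) = 1 :=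
    (Matrix.mem_unitaryGroup_iff').mp (hM.eigenvectorUnitary).2
  have hsp := hM.spectral_theorem
  rw [show M = (hM.eigenvectorUnitary : Matrix n n ℝ) * Matrix.diagonal (RCLike.ofReal ∘ hM.eigenvalues)
      * star (hM.eigenvectorUnitary : Matrix n n ℝ) from hsp]
  rw [my_charpoly_conj _ _ _ hU1 hU2, my_charpoly_diagonal]
  exact Polynomial.Splits.prod fun i _ => Polynomial.Splits.X_sub_C _

lemma my_charpoly_prod {M : Matrix n n ℝ} (hM : M.IsHermitian) :
    (M.charpoly.roots.map fun r => X - C r).prod = M.charpoly :=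
  Polynomial.prod_multiset_X_sub_C_of_monic_of_roots_card_eq (M.charpoly_monic) (my_card_roots hM)

end Gen


lemma Jmul (m l p : Type*) [Fintype m] [Fintype l] [Fintype p] :
    Jmat m l * Jmat l p = (Fintype.card l : ℝ) • Jmat m p := by
  ext i j
  simp [Jmat, Matrix.mul_apply, Finset.card_univ]

lemma mul_aIJ {m : Type*} [Fintype m] [DecidableEq m] (α β a b : ℝ) :
    (α • (1 : Matrix m m ℝ) + β • Jmat m m) * (a • (1 : Matrix m m ℝ) + b • Jmat m m) =
      (α * a) • (1 : Matrix m m ℝ) + (α * b + β * a + (Fintype.card m : ℝ) * β * b) • Jmat m m := by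
  simp only [Matrix.add_mul, Matrix.mul_add, Matrix.smul_mul, Matrix.mul_smul,
    Matrix.one_mul, Matrix.mul_one, Jmul, smul_smul]
  module

lemma det_aIJ {k : ℕ} (hk : 0 < k) (α β : ℝ) (hα : α ≠ 0) :
    (α • (1 : Matrix (Fin k) (Fin k) ℝ) + β • Jmat (Fin k) (Fin k)).det =
      α ^ (k - 1) * (α + k * β) := by
  have h1 : α • (1 : Matrix (Fin k) (Fin k) ℝ) + β • Jmat (Fin k) (Fin k) =
      α • ((1 : Matrix (Fin k) (Fin k) ℝ) +
        Matrix.replicateCol Unit (fun _ => β / α) * Matrix.replicateRow Unit (fun _ => (1 : ℝ))) := by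
    rw [smul_add]
    congr 1
    ext i j
    simp [Jmat, Matrix.mul_apply, Matrix.replicateCol, Matrix.replicateRow]
    field_simp
  rw [h1, Matrix.det_smul, Matrix.det_one_add_replicateCol_mul_replicateRow]
  have hcard : (Fintype.card (Fin k) : ℝ) = (k : ℝ) := by simp
  have hpow : α ^ k = α ^ (k - 1) * α := by
    rw [← pow_succ]; congr 1; omega
  simp only [dotProduct, Finset.sum_const, Finset.card_univ, Fintype.card_fin,
    nsmul_eq_mul, one_mul]
  rw [hpow]
  field_simp


variable {V : Type} [Fintype V] [DecidableEq V]

lemma lap_symm (E : Finset (Finset V)) (v w : V) : lapMatrix E v w = lapMatrix E w v := by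
  unfold lapMatrix
  simp only [Matrix.of_apply]
  rw [Finset.sum_filter, Finset.sum_filter]
  apply Finset.sum_congr rfl
  intro e _
  by_cases hvw : v = w
  · subst hvw; rfl
  by_cases hv : v ∈ e <;> by_cases hw : w ∈ e <;>
    simp [hv, hw, hvw, Ne.symm hvw]

lemma lap_herm (E : Finset (Finset V)) : (lapMatrix E).IsHermitian := by
  ext i j
  simp only [Matrix.conjTranspose_apply, star_trivial]
  exact lap_symm E j i

lemma lap_rowsum (E : Finset (Finset V)) (v : V) : ∑ w, lapMatrix E v w = 0 := by
  unfold lapMatrix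
  simp only [Matrix.of_apply]
  rw [Finset.sum_comm]
  apply Finset.sum_eq_zero
  intro e he
  rw [← Finset.mul_sum]
  have h1 : ∑ w : V, ((if w = v then (e.card : ℝ) else 0) - (if w ∈ e then 1 else 0)) = 0 := by
    rw [Finset.sum_sub_distrib]
    rw [Finset.sum_ite_eq' Finset.univ v (fun _ => (e.card : ℝ))]
    simp [Finset.sum_ite_mem, Finset.univ_inter]
  rw [h1, mul_zero]

lemma lap_mulVec_one (E : Finset (Finset V)) :
    lapMatrix E *ᵥ (fun _ => (1 : ℝ)) = fun _ => 0 := by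
  ext v
  simp only [Matrix.mulVec, dotProduct, mul_one]
  exact lap_rowsum E v


variable {V : Type} [Fintype V] [DecidableEq V]

lemma lap_dom (E : Finset (Finset V)) (k : ℕ) (hk : 0 < k) :
    lapMatrix (domEdges E k) = Matrix.fromBlocks
      (lapMatrix E + 1) (-(1 / (k : ℝ)) • Jmat V (Fin k)) (-(1 / (k : ℝ)) • Jmat (Fin k) V)
      (((Fintype.card V : ℝ) + (Fintype.card V : ℝ) / k) • 1
        - ((Fintype.card V : ℝ) / k) • Jmat (Fin k) (Fin k)) := by
  classical
  have hkr : (k : ℝ) ≠ 0 := Nat.cast_ne_zero.mpr hk.ne'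
  set S' : Finset (V ⊕ Fin k) := (Finset.univ : Finset (Fin k)).image Sum.inr with hS'
  have hnotin : ∀ u : V, Sum.inl u ∉ S' := by
    intro u hu
    simp [hS'] at hu
  have hScard : S'.card = k := by
    rw [hS', Finset.card_image_of_injective _ Sum.inr_injective, Finset.card_univ,
      Fintype.card_fin]
  have hcard_new : ∀ u : V, (insert (Sum.inl u) S').card = k + 1 := by
    intro u
    rw [Finset.card_insert_of_notMem (hnotin u), hScard]
  have hmem_new_inl : ∀ u v : V, Sum.inl v ∈ insert (Sum.inl u) S' ↔ v = u := by
    intro u v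
    constructor
    · intro hv
      rcases Finset.mem_insert.mp hv with h | h
      · exact Sum.inl_injective h
      · exact absurd h (hnotin v)
    · rintro rfl; exact Finset.mem_insert_self _ _
  have hmem_new_inr : ∀ (u : V) (j : Fin k), Sum.inr j ∈ insert (Sum.inl u) S' := by
    intro u j
    exact Finset.mem_insert_of_mem (by simp [hS'])
  have hdisj : Disjoint (E.image (Finset.image Sum.inl))
      ((Finset.univ : Finset V).image fun u => insert (Sum.inl u) S') := by
    rw [Finset.disjoint_left]
    rintro a ha hb
    obtain ⟨e, _, rfl⟩ := Finset.mem_image.mp ha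
    obtain ⟨u, -, hu⟩ := Finset.mem_image.mp hb
    have h0 : (Sum.inr ⟨0, hk⟩ : V ⊕ Fin k) ∈ e.image Sum.inl := by
      rw [← hu]
      exact hmem_new_inr u ⟨0, hk⟩
    simp at h0
  have hinj1 : ∀ x ∈ E, ∀ y ∈ E,
      x.image (Sum.inl : V → V ⊕ Fin k) = y.image (Sum.inl : V → V ⊕ Fin k) → x = y :=
    fun x _ y _ h => Finset.image_injective Sum.inl_injective h
  have hinj2 : ∀ x ∈ (Finset.univ : Finset V), ∀ y ∈ (Finset.univ : Finset V),
      insert (Sum.inl x) S' = insert (Sum.inl y) S' → x = y := by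
    intro x _ y _ h
    have : Sum.inl x ∈ insert (Sum.inl y) S' := h ▸ Finset.mem_insert_self _ _
    exact (hmem_new_inl y x).mp this
  have hmem_old_inl : ∀ (e : Finset V) (v : V),
      (Sum.inl v : V ⊕ Fin k) ∈ e.image Sum.inl ↔ v ∈ e := by
    intro e v; simp
  have hmem_old_inr : ∀ (e : Finset V) (j : Fin k), Sum.inr j ∉ e.image Sum.inl := by
    intro e j h; simp at h
  have hcard_old : ∀ e : Finset V, (e.image (Sum.inl : V → V ⊕ Fin k)).card = e.card :=
    fun e => Finset.card_image_of_injective _ Sum.inl_injective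
  ext i j
  show (∑ e ∈ (domEdges E k).filter (fun e => i ∈ e),
    (1 / ((e.card : ℝ) - 1)) * ((if j = i then (e.card : ℝ) else 0) - (if j ∈ e then 1 else 0))) = _
  rw [domEdges, Finset.filter_union, Finset.sum_union (Finset.disjoint_filter_filter hdisj),
    Finset.sum_filter, Finset.sum_filter, Finset.sum_image hinj1, Finset.sum_image hinj2]
  cases i with
  | inl v =>
    cases j with
    | inl w =>
      have hnew : ∑ u : V, (if Sum.inl v ∈ insert (Sum.inl u) S' then
          (1 / (((insert (Sum.inl u) S').card : ℝ) - 1)) *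
            ((if (Sum.inl w : V ⊕ Fin k) = Sum.inl v then ((insert (Sum.inl u) S').card : ℝ) else 0)
              - (if Sum.inl w ∈ insert (Sum.inl u) S' then 1 else 0)) else 0)
          = if w = v then 1 else 0 := by
        have : ∀ u : V, (if Sum.inl v ∈ insert (Sum.inl u) S' then
            (1 / (((insert (Sum.inl u) S').card : ℝ) - 1)) *
              ((if (Sum.inl w : V ⊕ Fin k) = Sum.inl v then ((insert (Sum.inl u) S').card : ℝ) else 0)
                - (if Sum.inl w ∈ insert (Sum.inl u) S' then 1 else 0)) else 0)
            = if v = u then (1 / ((k : ℝ) + 1 - 1)) *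
                ((if w = v then ((k : ℝ) + 1) else 0) - (if w = u then 1 else 0)) else 0 := by
          intro u
          simp only [hmem_new_inl, hcard_new, Sum.inl.injEq]
          push_cast
          rfl
        rw [Finset.sum_congr rfl (fun u _ => this u), Finset.sum_ite_eq Finset.univ v]
        simp only [Finset.mem_univ, if_true]
        by_cases hwv : w = v
        · subst hwv
          simp
          field_simp
        · simp [hwv]
      rw [hnew]
      have hold : ∀ e ∈ E, (if (Sum.inl v : V ⊕ Fin k) ∈ e.image Sum.inl then
          (1 / (((e.image (Sum.inl : V → V ⊕ Fin k)).card : ℝ) - 1)) *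
            ((if (Sum.inl w : V ⊕ Fin k) = Sum.inl v then ((e.image (Sum.inl : V → V ⊕ Fin k)).card : ℝ) else 0)
              - (if (Sum.inl w : V ⊕ Fin k) ∈ e.image Sum.inl then 1 else 0)) else 0)
          = if v ∈ e then (1 / ((e.card : ℝ) - 1)) *
              ((if w = v then (e.card : ℝ) else 0) - (if w ∈ e then 1 else 0)) else 0 := by
        intro e _
        simp only [hcard_old, hmem_old_inl, Sum.inl.injEq]
      rw [Finset.sum_congr rfl hold]
      show _ = (lapMatrix E + 1) v w
      rw [Matrix.add_apply, Matrix.one_apply]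
      unfold lapMatrix
      rw [Matrix.of_apply, Finset.sum_filter]
      congr 1
      by_cases hvw : v = w <;> simp [hvw, eq_comm]
    | inr jj =>
      simp only [hmem_old_inl, hmem_old_inr, hmem_new_inl, hmem_new_inr, hcard_new, if_true,
        if_false]
      push_cast
      simp [Finset.sum_ite_eq, Matrix.fromBlocks, Jmat]
  | inr ii =>
    cases j with
    | inl w =>
      simp only [hmem_old_inr, hmem_new_inl, hmem_new_inr, hcard_new, if_true, if_false]
      push_cast
      simp [Finset.sum_ite_eq, Matrix.fromBlocks, Jmat, Finset.sum_sub_distrib, ← Finset.mul_sum]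
    | inr jj =>
      simp only [hmem_old_inr, hmem_new_inr, hcard_new, if_true, if_false]
      push_cast
      simp only [Finset.sum_const, Finset.card_univ, if_false]
      by_cases hij : jj = ii
      · subst hij
        simp [Matrix.fromBlocks, Jmat, Finset.sum_const, Finset.card_univ]
        field_simp
      · simp [hij, Ne.symm hij, Matrix.fromBlocks, Jmat, Finset.sum_const, Finset.card_univ]
        field_simp



/-- The full spectrum (with multiplicity) of the Laplacian after adding a `k`-dominating
set, in terms of the spectrum of the original hypergraph. -/
theorem stmt_4 {V : Type} [Fintype V] [DecidableEq V] [Nonempty V]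
    (E : Finset (Finset V)) (hE : ∀ e ∈ E, 2 ≤ e.card) (k : ℕ) (hk : 0 < k)
    (μ : Multiset ℝ) (h : (lapMatrix E).charpoly.roots = (0 : ℝ) ::ₘ μ) :
    (lapMatrix (domEdges E k)).charpoly.roots =
      ((0 : ℝ) ::ₘ μ.map (· + 1)) + {((Fintype.card V : ℝ) + k) / k} +
        Multiset.replicate (k - 1) (((k : ℝ) + 1) * (Fintype.card V) / k) := by
  classical
  have hkr : (k : ℝ) ≠ 0 := Nat.cast_ne_zero.mpr hk.ne'
  set nr : ℝ := (Fintype.card V : ℝ) with hnr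
  set r2 : ℝ := (nr + (k : ℝ)) / (k : ℝ) with hr2
  set r3 : ℝ := ((k : ℝ) + 1) * nr / (k : ℝ) with hr3
  have hr3' : r3 = nr + nr / (k : ℝ) := by rw [hr3]; field_simp
  set Pm : ℝ[X] := ((μ.map (· + 1)).map fun r => X - C r).prod with hPm
  set q : ℝ[X] := X * Pm * (X - C r2) * (X - C r3) ^ (k - 1) with hq
  have hLprod : (((0 : ℝ) ::ₘ μ).map fun r => X - C r).prod = (lapMatrix E).charpoly := by
    rw [← h]; exact my_charpoly_prod (lap_herm E)
  have hmono : Pm.Monic :=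
    Polynomial.monic_multiset_prod_of_monic _ _ fun p _ => Polynomial.monic_X_sub_C p
  have key : (lapMatrix (domEdges E k)).charpoly = q := by
    apply Polynomial.eq_of_infinite_eval_eq
    have hbad : Set.Finite (({(1 : ℝ), nr / (k : ℝ), nr + nr / (k : ℝ)} : Set ℝ) ∪
        {x : ℝ | ((lapMatrix E + 1).charpoly).IsRoot x}) := by
      apply Set.Finite.union
      · exact (Set.finite_singleton _).insert _ |>.insert _
      · exact Polynomial.finite_setOf_isRoot (Matrix.charpoly_monic _).ne_zero
    apply Set.Infinite.mono ?_ hbad.infinite_compl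
    intro x hx
    simp only [Set.mem_compl_iff, Set.mem_union, Set.mem_insert_iff, Set.mem_singleton_iff,
      Set.mem_setOf_eq, not_or] at hx
    obtain ⟨⟨hx1, hx2, hx3⟩, hx4⟩ := hx
    have hx1' : x - 1 ≠ 0 := sub_ne_zero.mpr hx1
    set β : ℝ := nr / (k : ℝ) with hβdef
    have hkβ : (k : ℝ) * β = nr := by rw [hβdef]; field_simp
    set α : ℝ := x - nr - β with hαdef
    set δ : ℝ := x - β with hδdef
    have hα : α ≠ 0 := by
      rw [hαdef]; intro hc; apply hx3; linarith
    have hδ : δ ≠ 0 := by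
      rw [hδdef]; exact sub_ne_zero.mpr hx2
    have hδα : δ = α + (k : ℝ) * β := by rw [hδdef, hαdef, hkβ]; ring
    set a : ℝ := α⁻¹ with hadef
    set b : ℝ := -β / (α * δ) with hbdef
    set c : ℝ := 1 / ((k : ℝ) * δ) with hcdef
    set B' : Matrix V V ℝ := x • (1 : Matrix V V ℝ) - (lapMatrix E + 1) with hB'
    have hx4' : B'.det ≠ 0 := by
      rw [hB', ← my_eval_charpoly]; exact hx4
    set D : Matrix (Fin k) (Fin k) ℝ := α • 1 + β • Jmat (Fin k) (Fin k) with hD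
    set Dinv : Matrix (Fin k) (Fin k) ℝ := a • 1 + b • Jmat (Fin k) (Fin k) with hDinv
    -- block decomposition of x•1 - L₁
    have hsplit : x • (1 : Matrix (V ⊕ Fin k) (V ⊕ Fin k) ℝ) - lapMatrix (domEdges E k) =
        Matrix.fromBlocks B' ((1 / (k : ℝ)) • Jmat V (Fin k)) ((1 / (k : ℝ)) • Jmat (Fin k) V) D := by
      rw [lap_dom E k hk, hB', hD]
      ext i j
      cases i <;> cases j <;>
        simp [Matrix.fromBlocks, Jmat, Matrix.one_apply, hαdef, hβdef] <;>
        split_ifs <;> field_simp <;> ring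
    -- invertibility of D
    have hc1 : α * a = 1 := by rw [hadef]; field_simp
    have hc2 : α * b + β * a + (Fintype.card (Fin k) : ℝ) * β * b = 0 := by
      rw [Fintype.card_fin, hadef, hbdef]
      have hδ' : α + (k : ℝ) * β ≠ 0 := by rw [← hδα]; exact hδ
      have hδ'' : β * (k : ℝ) + α ≠ 0 := by rw [add_comm, mul_comm]; exact hδ'
      rw [hδα]
      field_simp
      linear_combination (-β) * mul_inv_cancel₀ hδ''
    have hD1 : D * Dinv = 1 := by
      rw [hD, hDinv, mul_aIJ, hc1, hc2, one_smul, zero_smul, add_zero]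
    have hD2 : Dinv * D = 1 := by
      rw [hD, hDinv, mul_aIJ]
      rw [show a * α = 1 by rw [mul_comm]; exact hc1,
        show a * β + b * α + (Fintype.card (Fin k) : ℝ) * b * β = 0 by
          rw [← hc2]; ring, one_smul, zero_smul, add_zero]
    letI : Invertible D := ⟨Dinv, hD2, hD1⟩
    have hInvOf : (⅟D : Matrix (Fin k) (Fin k) ℝ) = Dinv := rfl
    -- Schur complement coupling term
    have hSchurB : ((1 / (k : ℝ)) • Jmat V (Fin k)) * Dinv * ((1 / (k : ℝ)) • Jmat (Fin k) V) =
        c • Jmat V V := by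
      rw [hDinv]
      simp only [Matrix.smul_mul, Matrix.mul_smul, Matrix.mul_add, Matrix.add_mul, Jmul,
        Matrix.mul_one, smul_smul, Fintype.card_fin, smul_add]
      rw [hcdef, hadef, hbdef, hδα]
      have hδ' : α + (k : ℝ) * β ≠ 0 := by rw [← hδα]; exact hδ
      match_scalars
      field_simp
      ring
    -- determinant of the Schur complement
    have hBrow : ∀ v : V, ∑ w, B' v w = x - 1 := by
      intro v
      rw [hB']
      simp only [Matrix.sub_apply, Matrix.add_apply, Matrix.smul_apply, Matrix.one_apply,
        smul_eq_mul, mul_ite, mul_one, mul_zero]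
      rw [Finset.sum_sub_distrib, Finset.sum_add_distrib, Finset.sum_ite_eq, Finset.sum_ite_eq,
        lap_rowsum E v]
      simp
    have hdetA : (B' - c • Jmat V V).det = B'.det * (1 - nr * c * (x - 1)⁻¹) := by
      have hfact : B' - c • Jmat V V =
          B' * (1 + Matrix.replicateCol Unit (fun _ : V => -c * (x - 1)⁻¹) * Matrix.replicateRow Unit (fun _ : V => (1:ℝ))) := by
        rw [Matrix.mul_add, Matrix.mul_one]
        ext i j
        rw [Matrix.sub_apply, Matrix.add_apply]
        have hcr : (B' * (Matrix.replicateCol Unit (fun _ : V => -c * (x - 1)⁻¹) *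
            Matrix.replicateRow Unit (fun _ : V => (1 : ℝ)))) i j = -c := by
          rw [← Matrix.mul_assoc]
          rw [Matrix.mul_apply]
          simp only [Matrix.mul_apply, Matrix.replicateCol, Matrix.replicateRow, Matrix.of_apply,
            Finset.univ_unique, Finset.sum_const, Finset.card_singleton, one_smul, mul_one]
          rw [← Finset.sum_mul, hBrow i]
          field_simp
        rw [hcr]
        simp [Jmat]
        ring
      rw [hfact, Matrix.det_mul, Matrix.det_one_add_replicateCol_mul_replicateRow]
      congr 1
      simp only [dotProduct, one_mul, Finset.sum_const, Finset.card_univ, nsmul_eq_mul]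
      rw [← hnr]
      ring
    have hdetB' : B'.det = (x - 1) * Pm.eval x := by
      have hmat : B' = (x - 1) • (1 : Matrix V V ℝ) - lapMatrix E := by
        rw [hB', sub_smul, one_smul]
        abel
      rw [hmat, ← my_eval_charpoly, ← hLprod, Polynomial.eval_multiset_prod, hPm,
        Polynomial.eval_multiset_prod, Multiset.map_map, Multiset.map_map, Multiset.map_map,
        Multiset.map_cons, Multiset.prod_cons]
      simp only [Function.comp_apply, Polynomial.eval_sub, Polynomial.eval_X, Polynomial.eval_C,
        sub_zero]
      congr 1
      apply congrArg Multiset.prod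
      apply Multiset.map_congr rfl
      intro m _
      ring
    -- put it all together
    show Polynomial.eval x (lapMatrix (domEdges E k)).charpoly = Polynomial.eval x q
    rw [my_eval_charpoly, hsplit, Matrix.det_fromBlocks₂₂, hInvOf, hSchurB, hdetA, hdetB']
    have hdetD : D.det = α ^ (k - 1) * δ := by
      rw [hD, det_aIJ hk α β hα]
      congr 1
      exact hδα.symm
    rw [hdetD, hq]
    simp only [Polynomial.eval_mul, Polynomial.eval_pow, Polynomial.eval_sub, Polynomial.eval_X,
      Polynomial.eval_C]
    have hxr3 : x - r3 = α := by rw [hr3', hαdef]; ring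
    rw [hxr3]
    have hδc : δ * c = 1 / (k : ℝ) := by rw [hcdef]; field_simp
    have hscalar : δ * ((x - 1) * (1 - nr * c * (x - 1)⁻¹)) = x * (x - r2) := by
      calc δ * ((x - 1) * (1 - nr * c * (x - 1)⁻¹))
          = δ * (x - 1) - nr * (δ * c) * ((x - 1) * (x - 1)⁻¹) := by ring
        _ = δ * (x - 1) - nr * (1 / (k : ℝ)) := by
            rw [hδc, mul_inv_cancel₀ hx1', mul_one]
        _ = x * (x - r2) := by rw [hδdef, hβdef, hr2]; field_simp; ring
    calc α ^ (k - 1) * δ * ((x - 1) * Pm.eval x * (1 - nr * c * (x - 1)⁻¹))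
        = (δ * ((x - 1) * (1 - nr * c * (x - 1)⁻¹))) * (Pm.eval x * α ^ (k - 1)) := by ring
      _ = (x * (x - r2)) * (Pm.eval x * α ^ (k - 1)) := by rw [hscalar]
      _ = x * Pm.eval x * (x - r2) * α ^ (k - 1) := by ring
  rw [key, hq]
  have h1 : (X * Pm : ℝ[X]) ≠ 0 := (Polynomial.monic_X.mul hmono).ne_zero
  have h2 : (X * Pm * (X - C r2) : ℝ[X]) ≠ 0 :=
    ((Polynomial.monic_X.mul hmono).mul (Polynomial.monic_X_sub_C r2)).ne_zero
  have h3 : ((X - C r3) ^ (k - 1) : ℝ[X]) ≠ 0 := ((Polynomial.monic_X_sub_C r3).pow _).ne_zero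
  rw [Polynomial.roots_mul (mul_ne_zero h2 h3), Polynomial.roots_mul (mul_ne_zero h1 ((Polynomial.monic_X_sub_C r2).ne_zero)),
    Polynomial.roots_mul (mul_ne_zero Polynomial.X_ne_zero hmono.ne_zero),
    Polynomial.roots_X, Polynomial.roots_X_sub_C, Polynomial.roots_pow, Polynomial.roots_X_sub_C,
    hPm, Polynomial.roots_multiset_prod_X_sub_C, Multiset.nsmul_singleton,
    ← Multiset.singleton_add]
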